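/- There is no assignment of predetermined outputs for the 16 Pauli measurements M'_1,…,M'_16 on the 5-cycle graph state, where each vertex's output is a ±1 value depending on its own Pauli setting and those of its two neighbors, reproducing the quantum outcomes: the submeasurement of M'_1 = X₁X₂X₃X₄X₅ (all outputs kept) yields −1, and each of the 15 rotated submeasurements of X₁Y₃Y₄ (from X₁X₂Y₃Y₄X₅), Y₁X₂X₃Y₄ (from Y₁X₂X₃Y₄Y₅), and Y₁X₂X₃Y₄ (from Y₁X₂X₃Y₄X₅) under the five cyclic rotations yields +1. -/
import Mathlib


inductive Pauli | I | X | Y | Z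
deriving DecidableEq

open Pauli

/-- Settings of the measurement `M'_{2+k}` (before rotation): `X₁X₂Y₃Y₄X₅`. -/
def base1 : Fin 5 → Pauli := ![X, X, Y, Y, X]

/-- Kept outputs for `M'_{2+k}`: submeasurement `X₁Y₃Y₄`. -/
def keep1 : Fin 5 → Bool := ![true, false, true, true, false]

/-- Settings of `M'_{7+k}`: `Y₁X₂X₃Y₄Y₅`. -/
def base2 : Fin 5 → Pauli := ![Y, X, X, Y, Y]

/-- Settings of `M'_{12+k}`: `Y₁X₂X₃Y₄X₅`. -/
def base3 : Fin 5 → Pauli := ![Y, X, X, Y, X]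

/-- Kept outputs for `M'_{7+k}` and `M'_{12+k}`: submeasurement `Y₁X₂X₃Y₄`. -/
def keep23 : Fin 5 → Bool := ![true, true, true, true, false]

/-- No 1-LHV* model on the 5-cycle (each vertex's ±1 output depending on its own
Pauli setting and those of its two neighbours) reproduces the quantum outcomes of
the 16 measurements: `X₁X₂X₃X₄X₅` yields `-1` and the 15 rotated submeasurements
yield `+1`. -/
theorem stmt13 : ¬ ∃ h : Fin 5 → Pauli → Pauli → Pauli → ℤ,
    (∀ v a b c, h v a b c = 1 ∨ h v a b c = -1) ∧
    (∏ v : Fin 5, h v X X X) = -1 ∧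
    (∀ k : Fin 5,
      (∏ v : Fin 5, if keep1 (v - k) then
          h v (base1 (v - k)) (base1 (v - 1 - k)) (base1 (v + 1 - k)) else 1) = 1) ∧
    (∀ k : Fin 5,
      (∏ v : Fin 5, if keep23 (v - k) then
          h v (base2 (v - k)) (base2 (v - 1 - k)) (base2 (v + 1 - k)) else 1) = 1) ∧
    (∀ k : Fin 5,
      (∏ v : Fin 5, if keep23 (v - k) then
          h v (base3 (v - k)) (base3 (v - 1 - k)) (base3 (v + 1 - k)) else 1) = 1) := by
  rintro ⟨h, hpm, hmain, he1, he2, he3⟩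
  have sq : ∀ v a b c, h v a b c * h v a b c = 1 := by
    intro v a b c; rcases hpm v a b c with e | e <;> rw [e] <;> ring
  have E0 := he1 0
  have E1 := he1 1
  have E2 := he1 2
  have E3 := he1 3
  have E4 := he1 4
  have E5 := he2 0
  have E6 := he2 1
  have E7 := he2 2
  have E8 := he2 3
  have E9 := he2 4
  have E10 := he3 0
  have E11 := he3 1
  have E12 := he3 2
  have E13 := he3 3
  have E14 := he3 4
  simp only [Fin.prod_univ_five, base1, base2, base3, keep1, keep23, Fin.isValue,
    Matrix.cons_val_zero, Matrix.cons_val_one, Matrix.head_cons, Matrix.cons_val_two,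
    Matrix.tail_cons, Matrix.cons_val_three, Matrix.cons_val_four,
    Fin.reduceSub, Fin.reduceAdd, if_true, if_false, Bool.false_eq_true,
    ite_true, ite_false, mul_one, one_mul] at hmain E0 E1 E2 E3 E4 E5 E6 E7 E8 E9 E10 E11 E12 E13 E14
  have key : (1:ℤ) = h 0 X X X * h 1 X X X * h 2 X X X * h 3 X X X * h 4 X X X := by
    calc (1:ℤ) = (h 0 X X X * h 2 Y X Y * h 3 Y Y X) * (h 1 X X X * h 3 Y X Y * h 4 Y Y X) * (h 0 Y Y X * h 2 X X X * h 4 Y X Y) * (h 0 Y X Y * h 1 Y Y X * h 3 X X X) * (h 1 Y X Y * h 2 Y Y X * h 4 X X X) * (h 0 Y Y X * h 1 X Y X * h 2 X X Y * h 3 Y X Y) * (h 1 Y Y X * h 2 X Y X * h 3 X X Y * h 4 Y X Y) * (h 0 Y X Y * h 2 Y Y X * h 3 X Y X * h 4 X X Y) * (h 0 X X Y * h 1 Y X Y * h 3 Y Y X * h 4 X Y X) * (h 0 X Y X * h 1 X X Y * h 2 Y X Y * h 4 Y Y X) * (h 0 Y X X * h 1 X Y X * h 2 X X Y * h 3 Y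 X X) * (h 1 Y X X * h 2 X Y X * h 3 X X Y * h 4 Y X X) * (h 0 Y X X * h 2 Y X X * h 3 X Y X * h 4 X X Y) * (h 0 X X Y * h 1 Y X X * h 3 Y X X * h 4 X Y X) * (h 0 X Y X * h 1 X X Y * h 2 Y X X * h 4 Y X X) := by rw [E0, E1, E2, E3, E4, E5, E6, E7, E8, E9, E10, E11, E12, E13, E14]; ring
    _ = h 0 X X X * h 1 X X X * h 2 X X X * h 3 X X X * h 4 X X X * (h 0 X X Y * h 0 X X Y) * (h 0 X Y X * h 0 X Y X) * (h 0 Y X X * h 0 Y X X) * (h 0 Y X Y * h 0 Y X Y) * (h 0 Y Y X * h 0 Y Y X) * (h 1 X X Y * h 1 X X Y) * (h 1 X Y X * h 1 X Y X) * (h 1 Y X X * h 1 Y X X) * (h 1 Y X Y * h 1 Y X Y) * (h 1 Y Y X * h 1 Y Y X) * (h 2 X X Y * h 2 X X Y) * (h 2 X Y X * h 2 X Y X) * (h 2 Y X X * h 2 Y X X) * (h 2 Y X Y * h 2 Y X Y) * (h 2 Y Y X * h 2 Y Y X) * (h 3 X X Y * h 3 X X Y) * (h 3 X Y X * h 3 X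 Y X) * (h 3 Y X X * h 3 Y X X) * (h 3 Y X Y * h 3 Y X Y) * (h 3 Y Y X * h 3 Y Y X) * (h 4 X X Y * h 4 X X Y) * (h 4 X Y X * h 4 X Y X) * (h 4 Y X X * h 4 Y X X) * (h 4 Y X Y * h 4 Y X Y) * (h 4 Y Y X * h 4 Y Y X) := by ring
    _ = h 0 X X X * h 1 X X X * h 2 X X X * h 3 X X X * h 4 X X X := by
        rw [sq 0 X X Y, sq 0 X Y X, sq 0 Y X X, sq 0 Y X Y, sq 0 Y Y X, sq 1 X X Y, sq 1 X Y X, sq 1 Y X X, sq 1 Y X Y, sq 1 Y Y X, sq 2 X X Y, sq 2 X Y X, sq 2 Y X X, sq 2 Y X Y, sq 2 Y Y X, sq 3 X X Y, sq 3 X Y X, sq 3 Y X X, sq 3 Y X Y, sq 3 Y Y X, sq 4 X X Y, sq 4 X Y X, sq 4 Y X X, sq 4 Y X Y, sq 4 Y Y X]; ring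
  have : (1:ℤ) = -1 := key.trans (by linear_combination hmain)
  exact absurd this (by norm_num)
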